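/- Let Y be a (1-\delta)-dense source over (\{0,1\}^\lambda)^t, let G = (G_1,...,G_t) be chosen independently and uniformly from a universal hash family \mathcal{G} with range \{0,1\}^{\lambda'}, and suppose (1-\delta)\lambda > \lambda' + \log_2 t + 1. Then Pr_{G, Y, Y'}[G(Y) = G(Y')] \leq 2^{-\lambda' t}·(1 + 2^{-(1-\delta)\lambda + \lambda' + \log_2 t + 1}), where Y' is an independent copy of Y and G(Y) = (G_1(Y_1),...,G_t(Y_t)). -/

import Mathlib

lemma aux_pow_bound (x : ℝ) (hx : 0 ≤ x) :
    ∀ n : ℕ, 2 * n * x ≤ 1 → (1 + x) ^ n ≤ 1 + 2 * n * x := by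
  intro n
  induction n with
  | zero => simp
  | succ n ih =>
    intro h
    have hn : 2 * (n:ℝ) * x ≤ 1 := by
      refine le_trans ?_ h
      push_cast; nlinarith
    have H := ih hn
    have h1 : (1 + x) ^ (n+1) = (1 + x) ^ n * (1 + x) := pow_succ _ _
    have hpos : (0:ℝ) ≤ (1+x)^n := pow_nonneg (by linarith) n
    push_cast at h ⊢
    nlinarith

/-- Collision probability bound for block-wise hashing: with `Y` a `(1-δ)`-dense source
over `({0,1}^λ)^t`, `G` independent uniform hash functions from a universal family with
range `{0,1}^λ'`, `Y'` an independent copy of `Y`, and `(1-δ)λ > λ' + log₂ t + 1`,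
`Pr_{G,Y,Y'}[G(Y) = G(Y')] ≤ 2^{-λ't}(1 + 2^{-(1-δ)λ + λ' + log₂ t + 1})`. -/
theorem stmt_5 {t lam lam' : ℕ} {H : Type*} [Fintype H] [Nonempty H] (δ : ℝ)
    (ev : H → (Fin lam → Bool) → (Fin lam' → Bool))
    (huniv : ∀ x y : Fin lam → Bool, x ≠ y →
      ((Finset.univ.filter (fun g : H => ev g x = ev g y)).card : ℝ)
        ≤ (Fintype.card H : ℝ) * (2 : ℝ) ^ (-(lam' : ℝ)))
    (p : (Fin t → (Fin lam → Bool)) → ℝ)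
    (hp : ∀ y, 0 ≤ p y) (hsum : ∑ y, p y = 1)
    (hdense : ∀ (I : Finset (Fin t)) (v : Fin t → (Fin lam → Bool)),
      (∑ y, if ∀ i ∈ I, y i = v i then p y else 0)
        ≤ (2 : ℝ) ^ (-((1 - δ) * I.card * lam)))
    (hcond : (1 - δ) * lam > lam' + Real.logb 2 t + 1) :
    (∑ g : Fin t → H, ((Fintype.card H : ℝ) ^ t)⁻¹ *
        ∑ y, ∑ y', if (∀ i, ev (g i) (y i) = ev (g i) (y' i)) then p y * p y' else 0)
      ≤ (2 : ℝ) ^ (-((lam' : ℝ) * t)) *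
          (1 + (2 : ℝ) ^ (-(1 - δ) * lam + lam' + Real.logb 2 t + 1)) := by
  set c : ℝ := (2:ℝ) ^ (-(lam':ℝ)) with hc
  set a : ℝ := (2:ℝ) ^ (-((1-δ) * (lam:ℝ))) with ha
  have hc0 : 0 < c := Real.rpow_pos_of_pos two_pos _
  have ha0 : 0 < a := Real.rpow_pos_of_pos two_pos _
  set K : ℝ := (Fintype.card H : ℝ) ^ t with hK
  have hHpos : (0:ℝ) < (Fintype.card H : ℝ) := by exact_mod_cast Fintype.card_pos
  have hK0 : 0 < K := pow_pos hHpos t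
  -- Step 1: rearrange LHS
  have step1 : (∑ g : Fin t → H, K⁻¹ *
        ∑ y, ∑ y', if (∀ i, ev (g i) (y i) = ev (g i) (y' i)) then p y * p y' else 0)
      = ∑ y, ∑ y', (p y * p y') *
          (K⁻¹ * ∑ g : Fin t → H, if (∀ i, ev (g i) (y i) = ev (g i) (y' i)) then (1:ℝ) else 0) := by
    simp_rw [Finset.mul_sum]
    rw [Finset.sum_comm]
    refine Finset.sum_congr rfl fun y _ => ?_
    rw [Finset.sum_comm]
    refine Finset.sum_congr rfl fun y' _ => ?_
    simp_rw [mul_ite, mul_one, mul_zero]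
    ring_nf
  -- Step 2: pointwise bound on the collision probability for fixed y, y'
  have step2 : ∀ y y' : Fin t → (Fin lam → Bool),
      K⁻¹ * (∑ g : Fin t → H, if (∀ i, ev (g i) (y i) = ev (g i) (y' i)) then (1:ℝ) else 0)
        ≤ ∏ i : Fin t, ((if y i = y' i then (1:ℝ) else 0) + c) := by
    intro y y'
    have e1 : (∑ g : Fin t → H, if (∀ i, ev (g i) (y i) = ev (g i) (y' i)) then (1:ℝ) else 0)
        = ∏ i : Fin t, ((Finset.univ.filter
            (fun h : H => ev h (y i) = ev h (y' i))).card : ℝ) := by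
      calc (∑ g : Fin t → H, if (∀ i, ev (g i) (y i) = ev (g i) (y' i)) then (1:ℝ) else 0)
          = ∑ g : Fin t → H, ∏ i : Fin t,
              (if ev (g i) (y i) = ev (g i) (y' i) then (1:ℝ) else 0) := by
            refine Finset.sum_congr rfl fun g _ => ?_
            by_cases hgood : ∀ i, ev (g i) (y i) = ev (g i) (y' i)
            · rw [if_pos hgood]
              exact (Finset.prod_eq_one fun i _ => if_pos (hgood i)).symm
            · rw [if_neg hgood]
              push_neg at hgood
              obtain ⟨i, hi⟩ := hgood
              exact (Finset.prod_eq_zero (Finset.mem_univ i)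
                (if_neg hi : (if ev (g i) (y i) = ev (g i) (y' i) then (1:ℝ) else 0) = 0)).symm
        _ = ∏ i : Fin t, ∑ h : H, (if ev h (y i) = ev h (y' i) then (1:ℝ) else 0) := by
            rw [← Fintype.piFinset_univ]
            exact (Finset.prod_univ_sum (fun _ => (Finset.univ : Finset H))
              (fun i h => if ev h (y i) = ev h (y' i) then (1:ℝ) else 0)).symm
        _ = ∏ i : Fin t, ((Finset.univ.filter
              (fun h : H => ev h (y i) = ev h (y' i))).card : ℝ) := by
            refine Finset.prod_congr rfl fun i _ => ?_
            rw [Finset.sum_boole]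
    rw [e1]
    have hb : ∀ i : Fin t, ((Finset.univ.filter
          (fun h : H => ev h (y i) = ev h (y' i))).card : ℝ)
        ≤ (Fintype.card H : ℝ) * ((if y i = y' i then (1:ℝ) else 0) + c) := by
      intro i
      by_cases hyy : y i = y' i
      · rw [if_pos hyy]
        have h1 : ((Finset.univ.filter (fun h : H => ev h (y i) = ev h (y' i))).card : ℝ)
            ≤ (Fintype.card H : ℝ) := by exact_mod_cast Finset.card_filter_le _ _
        nlinarith
      · rw [if_neg hyy, zero_add]
        exact huniv _ _ hyy
    calc K⁻¹ * ∏ i : Fin t, ((Finset.univ.filter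
            (fun h : H => ev h (y i) = ev h (y' i))).card : ℝ)
        ≤ K⁻¹ * ∏ i : Fin t, ((Fintype.card H : ℝ) * ((if y i = y' i then (1:ℝ) else 0) + c)) := by
          refine mul_le_mul_of_nonneg_left ?_ (le_of_lt (inv_pos.mpr hK0))
          exact Finset.prod_le_prod (fun i _ => by positivity) (fun i _ => hb i)
      _ = ∏ i : Fin t, ((if y i = y' i then (1:ℝ) else 0) + c) := by
          rw [Finset.prod_mul_distrib, Finset.prod_const, Finset.card_univ, Fintype.card_fin]
          field_simp [hK]
          exact hK.symm
  -- Step 3: expand the product over subsets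
  have step3 : ∀ y y' : Fin t → (Fin lam → Bool),
      (∏ i : Fin t, ((if y i = y' i then (1:ℝ) else 0) + c))
        = ∑ S ∈ Finset.univ.powerset,
            (if ∀ i ∈ S, y i = y' i then (1:ℝ) else 0) * c ^ (t - S.card) := by
    intro y y'
    rw [Finset.prod_add]
    refine Finset.sum_congr rfl fun S hS => ?_
    rw [Finset.prod_const,
      Finset.card_sdiff_of_subset (Finset.mem_powerset.mp hS), Finset.card_univ, Fintype.card_fin]
    congr 1
    by_cases hall : ∀ i ∈ S, y i = y' i
    · rw [if_pos hall]
      exact Finset.prod_eq_one fun i hi => if_pos (hall i hi)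
    · rw [if_neg hall]
      push_neg at hall
      obtain ⟨i, hi, hne⟩ := hall
      exact Finset.prod_eq_zero hi (if_neg hne : (if y i = y' i then (1:ℝ) else 0) = 0)
  -- main chain
  have key : (∑ g : Fin t → H, K⁻¹ *
        ∑ y, ∑ y', if (∀ i, ev (g i) (y i) = ev (g i) (y' i)) then p y * p y' else 0)
      ≤ (a + c) ^ t := by
    rw [step1]
    have hbd : ∀ y y' : Fin t → (Fin lam → Bool),
        (p y * p y') * (K⁻¹ * ∑ g : Fin t → H,
            if (∀ i, ev (g i) (y i) = ev (g i) (y' i)) then (1:ℝ) else 0)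
      ≤ ∑ S ∈ Finset.univ.powerset,
          ((if ∀ i ∈ S, y i = y' i then (1:ℝ) else 0) * (p y * p y')) * c ^ (t - S.card) := by
      intro y y'
      calc (p y * p y') * (K⁻¹ * ∑ g : Fin t → H,
              if (∀ i, ev (g i) (y i) = ev (g i) (y' i)) then (1:ℝ) else 0)
          ≤ (p y * p y') * ∏ i : Fin t, ((if y i = y' i then (1:ℝ) else 0) + c) :=
            mul_le_mul_of_nonneg_left (step2 y y') (mul_nonneg (hp y) (hp y'))
        _ = ∑ S ∈ Finset.univ.powerset,
              ((if ∀ i ∈ S, y i = y' i then (1:ℝ) else 0) * (p y * p y')) * c ^ (t - S.card) := by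
            rw [step3, Finset.mul_sum]
            exact Finset.sum_congr rfl fun S _ => by ring
    calc (∑ y, ∑ y', (p y * p y') * (K⁻¹ * ∑ g : Fin t → H,
            if (∀ i, ev (g i) (y i) = ev (g i) (y' i)) then (1:ℝ) else 0))
        ≤ ∑ y, ∑ y', ∑ S ∈ Finset.univ.powerset,
            ((if ∀ i ∈ S, y i = y' i then (1:ℝ) else 0) * (p y * p y')) * c ^ (t - S.card) :=
          Finset.sum_le_sum fun y _ => Finset.sum_le_sum fun y' _ => hbd y y'
      _ = ∑ S ∈ Finset.univ.powerset, (∑ y', p y' *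
            (∑ y, if ∀ i ∈ S, y i = y' i then p y else 0)) * c ^ (t - S.card) := by
          calc (∑ y, ∑ y', ∑ S ∈ Finset.univ.powerset,
                ((if ∀ i ∈ S, y i = y' i then (1:ℝ) else 0) * (p y * p y')) * c ^ (t - S.card))
              = ∑ S ∈ Finset.univ.powerset, ∑ y, ∑ y',
                ((if ∀ i ∈ S, y i = y' i then (1:ℝ) else 0) * (p y * p y')) * c ^ (t - S.card) := by
                rw [show (∑ y, ∑ y', ∑ S ∈ Finset.univ.powerset,
                    ((if ∀ i ∈ S, y i = y' i then (1:ℝ) else 0) * (p y * p y')) * c ^ (t - S.card))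
                  = ∑ y, ∑ S ∈ Finset.univ.powerset, ∑ y',
                    ((if ∀ i ∈ S, y i = y' i then (1:ℝ) else 0) * (p y * p y')) * c ^ (t - S.card)
                  from Finset.sum_congr rfl fun y _ => Finset.sum_comm]
                exact Finset.sum_comm
            _ = ∑ S ∈ Finset.univ.powerset, (∑ y', p y' *
                  (∑ y, if ∀ i ∈ S, y i = y' i then p y else 0)) * c ^ (t - S.card) := by
                refine Finset.sum_congr rfl fun S _ => ?_
                rw [Finset.sum_comm, Finset.sum_mul]
                refine Finset.sum_congr rfl fun y' _ => ?_
                rw [Finset.mul_sum, Finset.sum_mul]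
                refine Finset.sum_congr rfl fun y _ => ?_
                split_ifs <;> ring
      _ ≤ ∑ S ∈ Finset.univ.powerset, (∑ y', p y' * a ^ S.card) * c ^ (t - S.card) := by
          refine Finset.sum_le_sum fun S _ => ?_
          refine mul_le_mul_of_nonneg_right ?_ (by positivity)
          refine Finset.sum_le_sum fun y' _ => ?_
          refine mul_le_mul_of_nonneg_left ?_ (hp y')
          calc (∑ y, if ∀ i ∈ S, y i = y' i then p y else 0)
              ≤ (2:ℝ) ^ (-((1 - δ) * S.card * lam)) := hdense S y'
            _ = a ^ S.card := by
                rw [ha, ← Real.rpow_natCast ((2:ℝ) ^ (-((1-δ) * (lam:ℝ)))) S.card,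
                  ← Real.rpow_mul (by norm_num)]
                ring_nf
      _ = ∑ S ∈ Finset.univ.powerset, a ^ S.card * c ^ (t - S.card) := by
          refine Finset.sum_congr rfl fun S _ => ?_
          rw [← Finset.sum_mul, hsum, one_mul]
      _ = (a + c) ^ t := by
          have h0 : (a + c) ^ t = ∏ _i : Fin t, (a + c) := by
            rw [Finset.prod_const, Finset.card_univ, Fintype.card_fin]
          rw [h0, Finset.prod_add]
          refine (Finset.sum_congr rfl fun S hS => ?_).symm
          rw [Finset.prod_const, Finset.prod_const,
            Finset.card_sdiff_of_subset (Finset.mem_powerset.mp hS), Finset.card_univ, Fintype.card_fin]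
  refine le_trans key ?_
  -- final analytic bound
  rcases Nat.eq_zero_or_pos t with ht0 | htpos
  · subst ht0
    simp only [pow_zero, Nat.cast_zero, mul_zero, neg_zero, Real.rpow_zero, one_mul]
    have hpow : (0:ℝ) < (2:ℝ) ^ (-(1 - δ) * (lam:ℝ) + lam' + Real.logb 2 0 + 1) :=
      Real.rpow_pos_of_pos two_pos _
    linarith
  · have htR : (0:ℝ) < (t:ℝ) := by exact_mod_cast htpos
    set x : ℝ := (2:ℝ) ^ (-(1-δ) * (lam:ℝ) + lam') with hx
    have hx0 : 0 < x := Real.rpow_pos_of_pos two_pos _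
    have hax : a = c * x := by
      rw [ha, hc, hx, ← Real.rpow_add two_pos]
      congr 1; ring
    have h2t : 2 * t * x ≤ 1 := by
      have hlt : x < (2:ℝ) ^ (-(Real.logb 2 t) - 1) := by
        rw [hx]
        apply (Real.rpow_lt_rpow_left_iff (by norm_num : (1:ℝ) < 2)).mpr
        linarith
      have heq : (2:ℝ) ^ (-(Real.logb 2 t) - 1) = 1 / (2*t) := by
        rw [Real.rpow_sub two_pos, Real.rpow_neg (le_of_lt two_pos),
          Real.rpow_logb two_pos (by norm_num) htR, Real.rpow_one]
        field_simp
      rw [heq] at hlt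
      have h2tpos : (0:ℝ) < 2 * (t:ℝ) := by positivity
      have hmul := (lt_div_iff₀ h2tpos).mp hlt
      nlinarith
    calc (a + c) ^ t = c ^ t * (1 + x) ^ t := by
          rw [hax, show c * x + c = c * (1 + x) by ring, mul_pow]
      _ ≤ c ^ t * (1 + 2 * t * x) :=
          mul_le_mul_of_nonneg_left (aux_pow_bound x hx0.le t h2t) (by positivity)
      _ = (2:ℝ) ^ (-((lam':ℝ) * t)) *
            (1 + (2:ℝ) ^ (-(1 - δ) * lam + lam' + Real.logb 2 t + 1)) := by
          congr 1
          · rw [hc, ← Real.rpow_natCast ((2:ℝ) ^ (-(lam':ℝ))) t,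
              ← Real.rpow_mul (by norm_num)]
            congr 1; ring
          · congr 1
            rw [show -(1 - δ) * (lam:ℝ) + lam' + Real.logb 2 t + 1
                  = (-(1-δ) * (lam:ℝ) + lam') + Real.logb 2 t + 1 by ring,
              Real.rpow_add two_pos, Real.rpow_add two_pos,
              Real.rpow_logb two_pos (by norm_num) htR, Real.rpow_one, ← hx]
            ring
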